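/- For all i with 0 ≤ i ≤ q-2, the transpose of M_i equals M_{q-2-i}, where M_i = U^i T with T = [[1, λ_q],[0,1]]. -/

import Mathlib

open Real Matrix

theorem stmt_4 (q : ℕ) (hq : 3 ≤ q)
    (lam : ℝ) (hlam : lam = 2 * Real.cos (Real.pi / q))
    (U T : Matrix (Fin 2) (Fin 2) ℝ)
    (hU : U = !![lam, -1; 1, 0]) (hT : T = !![1, lam; 0, 1])
    (M : ℕ → Matrix (Fin 2) (Fin 2) ℝ) (hM : ∀ i, M i = U ^ i * T) :
    ∀ i, i ≤ q - 2 → (M i)ᵀ = M (q - 2 - i) := by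
  set θ := Real.pi / q with hθ
  have hq0 : (q : ℝ) ≠ 0 := Nat.cast_ne_zero.mpr (by omega)
  have hq1 : (1 : ℝ) < q := by exact_mod_cast Nat.lt_of_lt_of_le (by norm_num) hq
  have hθpos : 0 < θ := div_pos Real.pi_pos (by linarith)
  have hθlt : θ < Real.pi := by
    rw [hθ]
    exact div_lt_self Real.pi_pos hq1
  have hsin : Real.sin θ ≠ 0 := ne_of_gt (Real.sin_pos_of_pos_of_lt_pi hθpos hθlt)
  set s : ℕ → ℝ := fun n => Real.sin (n * θ) / Real.sin θ with hs
  have hrec : ∀ n : ℕ, s (n + 2) = lam * s (n + 1) - s n := by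
    intro n
    have h1 : ((n : ℝ) + 2) * θ = ((n : ℝ) + 1) * θ + θ := by ring
    have h2 : (n : ℝ) * θ = ((n : ℝ) + 1) * θ - θ := by ring
    simp only [hs]
    push_cast
    rw [h1, h2, Real.sin_add, Real.sin_sub, hlam]
    field_simp
    ring
  have hsym : ∀ k : ℕ, k ≤ q → s (q - k) = s k := by
    intro k hk
    have hc : ((q - k : ℕ) : ℝ) * θ = Real.pi - k * θ := by
      rw [Nat.cast_sub hk, hθ]
      field_simp
    simp only [hs, hc, Real.sin_pi_sub]
  have hs0 : s 0 = 0 := by simp [hs]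
  have hs1 : s 1 = 1 := by
    simp only [hs, Nat.cast_one, one_mul]
    exact div_self hsin
  have hs2 : s 2 = lam := by
    have := hrec 0
    rw [hs0, hs1] at this
    simpa using this
  have hMs : ∀ i : ℕ, M i = !![s (i + 1), s (i + 2); s i, s (i + 1)] := by
    intro i
    induction i with
    | zero =>
      rw [hM, pow_zero, one_mul, hT, hs0, hs1, hs2]
    | succ n ih =>
      have e1 : s (n + 2) = lam * s (n + 1) - s n := hrec n
      have e2 : s (n + 3) = lam * s (n + 2) - s (n + 1) := hrec (n + 1)
      rw [hM, pow_succ', mul_assoc, ← hM, ih, hU]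
      ext a b
      fin_cases a <;> fin_cases b <;>
        simp [Matrix.mul_apply, Fin.sum_univ_two] <;>
        linarith [e1, e2]
  intro i hi
  rw [hMs i, hMs (q - 2 - i)]
  rw [show q - 2 - i + 1 = q - (i + 1) by omega,
      show q - 2 - i + 2 = q - i by omega,
      show q - 2 - i = q - (i + 2) by omega,
      hsym (i + 1) (by omega), hsym i (by omega), hsym (i + 2) (by omega)]
  ext a b
  fin_cases a <;> fin_cases b <;> simp [Matrix.transpose_apply]
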